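/- Let u, v : [a,b] → ℝ be nonnegative convex functions. Then for all t ∈ [0,1], u(ta+(1-t)b)v(ta+(1-t)b) + u((1-t)a+tb)v((1-t)a+tb) ≤ (2t² - 2t + 1)[u(a)v(a) + u(b)v(b)] + 2t(1-t)[u(a)v(b) + u(b)v(a)]. -/
import Mathlib

theorem product_convex_bound
    (a b : ℝ) (hab : a < b) (u v : ℝ → ℝ)
    (hu : ConvexOn ℝ (Set.Icc a b) u) (hv : ConvexOn ℝ (Set.Icc a b) v)
    (hupos : ∀ x ∈ Set.Icc a b, 0 ≤ u x) (hvpos : ∀ x ∈ Set.Icc a b, 0 ≤ v x) :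
    ∀ t ∈ Set.Icc (0:ℝ) 1,
      u (t * a + (1 - t) * b) * v (t * a + (1 - t) * b) +
        u ((1 - t) * a + t * b) * v ((1 - t) * a + t * b) ≤
      (2 * t ^ 2 - 2 * t + 1) * (u a * v a + u b * v b) +
        2 * t * (1 - t) * (u a * v b + u b * v a) := by
  intro t ht
  obtain ⟨ht0, ht1⟩ := ht
  have ht1' : 0 ≤ 1 - t := by linarith
  have ha : a ∈ Set.Icc a b := ⟨le_refl a, le_of_lt hab⟩
  have hb : b ∈ Set.Icc a b := ⟨le_of_lt hab, le_refl b⟩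
  have hx : t * a + (1 - t) * b ∈ Set.Icc a b := by
    constructor <;> nlinarith
  have hy : (1 - t) * a + t * b ∈ Set.Icc a b := by
    constructor <;> nlinarith
  have hu1 : u (t * a + (1 - t) * b) ≤ t * u a + (1 - t) * u b :=
    hu.2 ha hb ht0 ht1' (by ring)
  have hv1 : v (t * a + (1 - t) * b) ≤ t * v a + (1 - t) * v b :=
    hv.2 ha hb ht0 ht1' (by ring)
  have hu2 : u ((1 - t) * a + t * b) ≤ (1 - t) * u a + t * u b :=
    hu.2 ha hb ht1' ht0 (by ring)
  have hv2 : v ((1 - t) * a + t * b) ≤ (1 - t) * v a + t * v b :=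
    hv.2 ha hb ht1' ht0 (by ring)
  have p1 : u (t * a + (1 - t) * b) * v (t * a + (1 - t) * b) ≤
      (t * u a + (1 - t) * u b) * (t * v a + (1 - t) * v b) :=
    mul_le_mul hu1 hv1 (hvpos _ hx) (by nlinarith [hupos a ha, hupos b hb])
  have p2 : u ((1 - t) * a + t * b) * v ((1 - t) * a + t * b) ≤
      ((1 - t) * u a + t * u b) * ((1 - t) * v a + t * v b) :=
    mul_le_mul hu2 hv2 (hvpos _ hy) (by nlinarith [hupos a ha, hupos b hb])
  nlinarith [p1, p2]
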